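/- Let ℒ be a bilinear functional with biorthogonal families pₙ, sₙ satisfying ℒ(pₙ, sₘ) = δₙₘ. Suppose invertible lower unitriangular semi-infinite matrices (𝟙 + L̂) act on the wave vectors so that p̂ = (𝟙 + L̂)^{-1} p and ŝ = (𝟙 + L̂ᵗ) s / B₂ are polynomial vectors. Then ℒ̂(p̂ₙ, ŝₘ) = δₙₘ where ℒ̂(f, g) := ℒ(f, B₂ g); i.e. p̂ₙ, ŝₙ are biorthogonal for ℒ̂. -/

import Mathlib

open Polynomial

/-- Let `L` be bilinear with biorthogonal families `pₙ, sₙ` (`deg pₙ = deg sₙ = n`,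
`L(pₙ, sₘ) = δₙₘ`). If `L̂` is a strictly lower triangular band matrix such that
`p̂ = (𝟙 + L̂)⁻¹p` (i.e. `(𝟙 + L̂)p̂ = p`) and `ŝ = (𝟙 + L̂ᵗ)s / B₂` are polynomial
vectors, then `L̂(p̂ₙ, ŝₘ) = δₙₘ` for the functional `L̂(f,g) := L(f, B₂·g)`. -/
theorem biorthogonality_hat (L : Polynomial ℂ →ₗ[ℂ] Polynomial ℂ →ₗ[ℂ] ℂ)
    (B₂ : Polynomial ℂ) (b : ℕ)
    (p s phat shat : ℕ → Polynomial ℂ) (Lh : ℕ → ℕ → ℂ)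
    (hLh_lower : ∀ n m, n ≤ m → Lh n m = 0)
    (hLh_band : ∀ n m, m + b < n → Lh n m = 0)
    (hdeg : ∀ n, (p n).natDegree = n ∧ (s n).natDegree = n)
    (hbi : ∀ n m, L (p n) (s m) = if n = m then 1 else 0)
    (hphat : ∀ n, p n = phat n + ∑ m ∈ Finset.range n, C (Lh n m) * phat m)
    (hshat : ∀ n, B₂ * shat n = s n + ∑ m ∈ Finset.Ioc n (n + b), C (Lh m n) * s m) :
    ∀ n m, L (phat n) (B₂ * shat m) = if n = m then 1 else 0 := by
  intro n m
  set A : ℕ → ℕ → ℂ := fun i j => L (phat i) (s j) with hAdef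
  -- left inverse relation: (𝟙 + Lh) * A = 𝟙
  have hA : ∀ i j, A i j + ∑ k ∈ Finset.range i, Lh i k * A k j
      = if i = j then 1 else 0 := by
    intro i j
    have h1 : L (p i) (s j) = A i j + ∑ k ∈ Finset.range i, Lh i k * A k j := by
      rw [hphat i]
      simp only [← Polynomial.smul_eq_C_mul, map_add, map_sum, map_smul,
        LinearMap.add_apply, LinearMap.sum_apply, LinearMap.smul_apply, smul_eq_mul]
      rfl
    rw [← h1, hbi]
  set N : ℕ := max n m + b + 1 with hN
  have hnN : n < N := by omega
  have hmN : m < N := by omega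
  set M : Matrix (Fin N) (Fin N) ℂ :=
    Matrix.of (fun i j => (if (i : ℕ) = (j : ℕ) then 1 else 0) + Lh i j) with hM
  set AM : Matrix (Fin N) (Fin N) ℂ := Matrix.of (fun i j => A i j) with hAM
  have hMA : M * AM = 1 := by
    ext i j
    rw [Matrix.mul_apply]
    have e1 : ∀ k : Fin N, M i k * AM k j
        = (if i = k then (1:ℂ) else 0) * A k j + Lh i k * A k j := by
      intro k
      simp only [hM, hAM, Matrix.of_apply, add_mul, Fin.val_inj]
    simp only [e1, Finset.sum_add_distrib]
    have e2 : ∑ k : Fin N, (if i = k then (1:ℂ) else 0) * A k j = A i j := by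
      simp
    have e3 : ∑ k : Fin N, Lh i k * A k j = ∑ k ∈ Finset.range i, Lh i k * A k j := by
      rw [Fin.sum_univ_eq_sum_range (fun k => Lh i k * A k j)]
      refine (Finset.sum_subset ?_ ?_).symm
      · exact Finset.range_subset_range.2 (le_of_lt i.isLt)
      · intro k hk hk'
        rw [hLh_lower i k (by simpa using hk'), zero_mul]
    rw [e2, e3, hA, Matrix.one_apply]
    simp [Fin.val_inj]
  have hAMM : AM * M = 1 := mul_eq_one_comm.mp hMA
  have key := congrFun (congrFun hAMM ⟨n, hnN⟩) ⟨m, hmN⟩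
  rw [Matrix.mul_apply] at key
  have e1 : ∀ k : Fin N, AM ⟨n, hnN⟩ k * M k ⟨m, hmN⟩
      = A n k * (if (k : ℕ) = m then (1:ℂ) else 0) + A n k * Lh k m := by
    intro k
    simp only [hM, hAM, Matrix.of_apply, mul_add]
  simp only [e1, Finset.sum_add_distrib] at key
  have e2 : ∑ k : Fin N, A n k * (if (k : ℕ) = m then (1:ℂ) else 0) = A n m := by
    rw [Fin.sum_univ_eq_sum_range (fun k => A n k * (if k = m then (1:ℂ) else 0))]
    rw [Finset.sum_eq_single m]
    · simp
    · intro k _ hk; simp [hk]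
    · intro h; exact absurd (Finset.mem_range.2 hmN) h
  have e3 : ∑ k : Fin N, A n k * Lh k m
      = ∑ k ∈ Finset.Ioc m (m + b), Lh k m * A n k := by
    rw [Fin.sum_univ_eq_sum_range (fun k => A n k * Lh k m)]
    have hsub : Finset.Ioc m (m+b) ⊆ Finset.range N := by
      intro k hk
      simp only [Finset.mem_Ioc] at hk
      exact Finset.mem_range.2 (by omega)
    rw [← Finset.sum_subset hsub ?_]
    · exact Finset.sum_congr rfl (fun k _ => mul_comm _ _)
    · intro k hk hk'
      simp only [Finset.mem_Ioc, not_and_or, not_le, not_lt] at hk'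
      rcases hk' with h | h
      · rw [hLh_lower k m (by omega), mul_zero]
      · rw [hLh_band k m h, mul_zero]
  rw [e2, e3] at key
  have goal1 : L (phat n) (B₂ * shat m)
      = A n m + ∑ k ∈ Finset.Ioc m (m + b), Lh k m * A n k := by
    rw [hshat m]
    simp only [← Polynomial.smul_eq_C_mul, map_add, map_sum, map_smul, smul_eq_mul]
    rfl
  rw [goal1, key, Matrix.one_apply]
  simp [Fin.mk.injEq]
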